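/- Let N be a positive integer. Define u¹ : ℝ² → ℝ by u¹(τ,x) = Σ_{k=1, k≠N}^{3N−2} b_{1,k} · cos τ · sin(k x) + Σ_{k=1}^{3N−2} b_{3,k} · cos 3τ · sin(k x), where b_{1,k} = −3 S_{N,N,N,k}/(4(k² − N²)) and b_{3,k} = −S_{N,N,N,k}/(4(k² − 9N²)). Then for all (τ,x) ∈ ℝ × (0,π), N² ∂²_τ u¹(τ,x) − ∂²_x u¹(τ,x) = (3N/4) · cos τ · sin(N x) − cos³τ · sin³(N x)/sin²x. -/

import Mathlib

open Real Set Finset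

/-- The function 𝔪(j,k) = (1/2)·sgn(j)·sgn(k)·min(|j|,|k|). -/
noncomputable def frakm (j k : ℤ) : ℝ :=
  (1 / 2 : ℝ) * (j.sign : ℝ) * (k.sign : ℝ) * ((min |j| |k| : ℤ) : ℝ)

/-- The interaction coefficient S_{j,k,l,m}. -/
noncomputable def Scoef (j k l m : ℤ) : ℝ :=
  if Even (j + k + l + m) then
    frakm (j + k - l) m + frakm (j - k + l) m + frakm (-j + k + l) m - frakm (j + k + l) m
  else 0

/-- the explicit first-order term of the Poincaré–Lindstedt expansion
solves the first-order equation once the secular term is removed by ω⁽¹⁾ = 3N/4. -/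
def clamp (a k : ℤ) : ℤ := max (-a) (min a k)

lemma clamp_spec (a k : ℤ) (ha : 0 ≤ a) :
    (k ≤ -a ∧ clamp a k = -a) ∨ (-a ≤ k ∧ k ≤ a ∧ clamp a k = k) ∨ (a ≤ k ∧ clamp a k = a) := by
  unfold clamp
  rcases le_total k (-a) with h1 | h1
  · exact Or.inl ⟨h1, by rw [min_eq_right (by omega), max_eq_left (by omega)]⟩
  · rcases le_total k a with h2 | h2
    · exact Or.inr (Or.inl ⟨h1, h2, by rw [min_eq_right h2, max_eq_right h1]⟩)
    · exact Or.inr (Or.inr ⟨h2, by rw [min_eq_left h2, max_eq_right (by omega)]⟩)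

lemma frakm_pos (a k : ℤ) (ha : 0 < a) : frakm a k = (clamp a k : ℝ) / 2 := by
  unfold frakm clamp
  rcases lt_trichotomy k 0 with hk | hk | hk
  · rw [Int.sign_eq_one_of_pos ha, Int.sign_eq_neg_one_of_neg hk, abs_of_pos ha, abs_of_neg hk]
    have h : max (-a) (min a k) = -(min a (-k)) := by omega
    rw [h]; push_cast; ring
  · subst hk
    have h : max (-a) (min a 0) = 0 := by omega
    rw [h]; simp
  · rw [Int.sign_eq_one_of_pos ha, Int.sign_eq_one_of_pos hk, abs_of_pos ha, abs_of_pos hk]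
    have h : max (-a) (min a k) = min a k := by omega
    rw [h]; push_cast; ring

/-- integer-valued coefficient: `Scoef N N N k = gg N k / 2`. -/
def gg (N : ℕ) (k : ℤ) : ℤ := if Even (k + N) then 3 * clamp N k - clamp (3 * N) k else 0

lemma scoef_formula (N : ℕ) (hN : 0 < N) (k : ℤ) :
    Scoef N N N k = (gg N k : ℝ) / 2 := by
  have hN' : (0 : ℤ) < N := by exact_mod_cast hN
  unfold Scoef gg
  have e1 : ((N : ℤ) + N - N) = N := by ring
  have e2 : ((N : ℤ) - N + N) = N := by ring
  have e3 : (-(N : ℤ) + N + N) = N := by ring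
  have e4 : ((N : ℤ) + N + N) = 3 * N := by ring
  rw [e1, e2, e3, e4]
  have hpar : Even (3 * (N:ℤ) + k) ↔ Even (k + N) := by
    simp only [Int.even_iff]; omega
  rw [if_congr hpar rfl rfl]
  split_ifs with h
  · rw [frakm_pos _ _ hN', frakm_pos _ _ (by omega : (0:ℤ) < 3 * N)]
    push_cast; ring
  · simp

set_option maxHeartbeats 1000000 in
lemma gg_delta (N : ℕ) (hN : 0 < N) (m : ℤ) :
    2 * gg N m - gg N (m - 2) - gg N (m + 2) =
      (if m = (N:ℤ) then 6 else 0) + (if m = -(N:ℤ) then -6 else 0)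
      + (if m = 3 * (N:ℤ) then -2 else 0) + (if m = -(3 * (N:ℤ)) then 2 else 0) := by
  have hN' : (0 : ℤ) < N := by exact_mod_cast hN
  unfold gg
  have p1 : Even (m - 2 + N) ↔ Even (m + N) := by simp only [Int.even_iff]; omega
  have p2 : Even (m + 2 + N) ↔ Even (m + N) := by simp only [Int.even_iff]; omega
  rw [if_congr p1 rfl rfl, if_congr p2 rfl rfl]
  by_cases h : Even (m + N)
  · rw [if_pos h, if_pos h, if_pos h]
    rw [Int.even_iff] at h
    have A1 := clamp_spec N m (by omega)
    have A2 := clamp_spec (3*N) m (by omega)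
    have A3 := clamp_spec N (m-2) (by omega)
    have A4 := clamp_spec (3*N) (m-2) (by omega)
    have A5 := clamp_spec N (m+2) (by omega)
    have A6 := clamp_spec (3*N) (m+2) (by omega)
    split_ifs <;> omega
  · rw [if_neg h, if_neg h, if_neg h]
    rw [Int.even_iff] at h
    split_ifs <;> omega

lemma gg_zero_of_ge (N : ℕ) (hN : 0 < N) (k : ℤ) (h : 3 * (N:ℤ) - 1 ≤ k ∨ k ≤ 1 - 3 * (N:ℤ)) :
    gg N k = 0 := by
  have hN' : (0 : ℤ) < N := by exact_mod_cast hN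
  unfold gg
  split_ifs with he
  · rw [Int.even_iff] at he
    have H1 := clamp_spec N k (by omega)
    have H2 := clamp_spec (3*N) k (by omega)
    omega
  · rfl

lemma gg_neg (N : ℕ) (k : ℤ) : gg N (-k) = - gg N k := by
  unfold gg
  have p : Even (-k + N) ↔ Even (k + N) := by simp only [Int.even_iff]; omega
  rw [if_congr p rfl rfl]
  split_ifs with h
  · have h1 : clamp N (-k) = - clamp N k := by unfold clamp; omega
    have h2 : clamp (3*N) (-k) = - clamp (3*N) k := by unfold clamp; omega
    rw [h1, h2]; ring
  · ring

lemma scoef_NN (N : ℕ) (hN : 0 < N) : Scoef N N N N = N := by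
  rw [scoef_formula N hN]
  have hN' : (0:ℤ) < N := by exact_mod_cast hN
  have : gg N N = 2 * N := by
    unfold gg
    rw [if_pos (by simp only [Int.even_iff]; omega)]
    have h1 := clamp_spec N N (by omega)
    have h2 := clamp_spec (3*N) N (by omega)
    omega
  rw [this]; push_cast; ring

lemma sin_shift_combine (c θ x : ℝ) :
    Real.sin x ^ 2 * (c * Real.sin θ) =
      (2 * (c * Real.sin θ) - c * Real.sin (θ + 2*x) - c * Real.sin (θ - 2*x)) / 4 := by
  have h1 : Real.sin (θ + 2*x) + Real.sin (θ - 2*x) = 2 * Real.sin θ * Real.cos (2*x) := by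
    rw [Real.sin_add, Real.sin_sub]; ring
  have h2 : Real.cos (2*x) = 1 - 2 * Real.sin x ^ 2 := by
    rw [Real.cos_two_mul' x]
    linarith [Real.sin_sq_add_cos_sq x]
  linear_combination (c/4) * h1 + (c * Real.sin θ/2) * h2

lemma key_identity (N : ℕ) (hN : 0 < N) (x : ℝ) :
    Real.sin x ^ 2 * ∑ k ∈ Finset.Icc 1 (3 * N - 2),
      Scoef N N N k * Real.sin (k * x) = Real.sin ((N:ℝ) * x) ^ 3 := by
  have hN' : (0:ℤ) < N := by exact_mod_cast hN
  set M : ℤ := 3 * (N:ℤ) + 2 with hM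
  set W : Finset ℤ := Finset.Icc (-M) M with hW
  set f : ℤ → ℝ := fun k => (gg N k : ℝ) * Real.sin ((k:ℝ) * x) with hf
  -- Step A : the ℕ-sum equals (1/4) ∑_W f
  have stepA : ∑ k ∈ Finset.Icc 1 (3 * N - 2), Scoef N N N k * Real.sin (k * x)
      = (1/4) * ∑ k ∈ W, f k := by
    have hA1 : ∑ k ∈ Finset.Icc 1 (3 * N - 2), Scoef N N N k * Real.sin (k * x)
        = (1/2) * ∑ k ∈ Finset.Icc (1:ℤ) (3 * (N:ℤ) - 2), f k := by
      rw [Finset.mul_sum]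
      apply Finset.sum_nbij' (i := fun (k:ℕ) => (k:ℤ)) (j := fun (k:ℤ) => k.toNat)
      · intro a ha; simp only [Finset.mem_Icc] at ha ⊢; omega
      · intro a ha; simp only [Finset.mem_Icc] at ha ⊢; omega
      · intro a _; simp
      · intro a ha; simp only [Finset.mem_Icc] at ha; omega
      · intro a _
        rw [scoef_formula N hN]
        simp only [hf]
        push_cast
        ring
    have hA2 : ∑ k ∈ W, f k = 2 * ∑ k ∈ Finset.Icc (1:ℤ) (3 * (N:ℤ) - 2), f k := by
      have hsplit : W = Finset.Icc (-M) (-1) ∪ Finset.Icc 0 M := by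
        ext k; simp only [hW, Finset.mem_union, Finset.mem_Icc]; omega
      have hdisj : Disjoint (Finset.Icc (-M) (-1)) (Finset.Icc (0:ℤ) M) := by
        rw [Finset.disjoint_left]
        intro a ha hb; simp only [Finset.mem_Icc] at ha hb; omega
      rw [hsplit, Finset.sum_union hdisj]
      have hneg : ∑ k ∈ Finset.Icc (-M) (-1), f k = ∑ k ∈ Finset.Icc (1:ℤ) M, f k := by
        apply Finset.sum_nbij' (i := fun (k:ℤ) => -k) (j := fun (k:ℤ) => -k)
        · intro a ha; simp only [Finset.mem_Icc] at ha ⊢; omega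
        · intro a ha; simp only [Finset.mem_Icc] at ha ⊢; omega
        · intro a _; ring
        · intro a _; ring
        · intro a _
          simp only [hf, gg_neg N a]
          push_cast
          rw [show (-(a:ℝ)) * x = -((a:ℝ)*x) by ring, Real.sin_neg]
          ring
      have hzero : ∑ k ∈ Finset.Icc (0:ℤ) M, f k = ∑ k ∈ Finset.Icc (1:ℤ) M, f k := by
        rw [show Finset.Icc (0:ℤ) M = insert 0 (Finset.Icc 1 M) by
          ext k; simp only [Finset.mem_insert, Finset.mem_Icc]; omega]
        rw [Finset.sum_insert (by simp)]
        simp [hf]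
      have htrim : ∑ k ∈ Finset.Icc (1:ℤ) (3 * (N:ℤ) - 2), f k = ∑ k ∈ Finset.Icc (1:ℤ) M, f k := by
        apply Finset.sum_subset
        · intro a ha; simp only [Finset.mem_Icc] at ha ⊢; omega
        · intro a ha hna
          simp only [Finset.mem_Icc] at ha hna
          simp only [hf, gg_zero_of_ge N hN a (by omega)]
          simp
      rw [hneg, hzero, htrim]; ring
    rw [hA1, hA2]; ring
  rw [stepA]
  -- Step B : shifted sums
  set Ω : Finset ℤ := Finset.Icc (-M - 2) (M + 2) with hΩ
  have hgz : ∀ m : ℤ, m ∈ Ω → m ∉ W → ∀ j : ℤ, (j = m - 2 ∨ j = m ∨ j = m + 2) → gg N j = 0 := by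
    intro m hm hnm j hj
    simp only [hΩ, hW, Finset.mem_Icc] at hm hnm
    apply gg_zero_of_ge N hN
    omega
  have shiftp : ∑ k ∈ W, (gg N k : ℝ) * Real.sin (((k:ℝ) + 2) * x)
      = ∑ m ∈ W, (gg N (m - 2) : ℝ) * Real.sin ((m:ℝ) * x) := by
    have e1 : ∑ k ∈ W, (gg N k : ℝ) * Real.sin (((k:ℝ) + 2) * x)
        = ∑ m ∈ Finset.Icc (-M + 2) (M + 2), (gg N (m - 2) : ℝ) * Real.sin ((m:ℝ) * x) := by
      apply Finset.sum_nbij' (i := fun (k:ℤ) => k + 2) (j := fun (m:ℤ) => m - 2)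
      · intro a ha; simp only [hW, Finset.mem_Icc] at ha ⊢; omega
      · intro a ha; simp only [hW, Finset.mem_Icc] at ha ⊢; omega
      · intro a _; ring
      · intro a _; ring
      · intro a _; push_cast; ring_nf
    have e2 : ∑ m ∈ Finset.Icc (-M + 2) (M + 2), (gg N (m - 2) : ℝ) * Real.sin ((m:ℝ) * x)
        = ∑ m ∈ Ω, (gg N (m - 2) : ℝ) * Real.sin ((m:ℝ) * x) := by
      apply Finset.sum_subset
      · intro a ha; simp only [hΩ, Finset.mem_Icc] at ha ⊢; omega
      · intro a ha hna
        simp only [hΩ, Finset.mem_Icc] at ha hna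
        rw [gg_zero_of_ge N hN (a - 2) (by omega)]
        simp
    have e3 : ∑ m ∈ W, (gg N (m - 2) : ℝ) * Real.sin ((m:ℝ) * x)
        = ∑ m ∈ Ω, (gg N (m - 2) : ℝ) * Real.sin ((m:ℝ) * x) := by
      apply Finset.sum_subset
      · intro a ha; simp only [hW, hΩ, Finset.mem_Icc] at ha ⊢; omega
      · intro a ha hna
        simp only [hW, hΩ, Finset.mem_Icc] at ha hna
        rw [gg_zero_of_ge N hN (a - 2) (by omega)]
        simp
    rw [e1, e2, e3]
  have shiftm : ∑ k ∈ W, (gg N k : ℝ) * Real.sin (((k:ℝ) - 2) * x)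
      = ∑ m ∈ W, (gg N (m + 2) : ℝ) * Real.sin ((m:ℝ) * x) := by
    have e1 : ∑ k ∈ W, (gg N k : ℝ) * Real.sin (((k:ℝ) - 2) * x)
        = ∑ m ∈ Finset.Icc (-M - 2) (M - 2), (gg N (m + 2) : ℝ) * Real.sin ((m:ℝ) * x) := by
      apply Finset.sum_nbij' (i := fun (k:ℤ) => k - 2) (j := fun (m:ℤ) => m + 2)
      · intro a ha; simp only [hW, Finset.mem_Icc] at ha ⊢; omega
      · intro a ha; simp only [hW, Finset.mem_Icc] at ha ⊢; omega
      · intro a _; ring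
      · intro a _; ring
      · intro a _; push_cast; ring_nf
    have e2 : ∑ m ∈ Finset.Icc (-M - 2) (M - 2), (gg N (m + 2) : ℝ) * Real.sin ((m:ℝ) * x)
        = ∑ m ∈ Ω, (gg N (m + 2) : ℝ) * Real.sin ((m:ℝ) * x) := by
      apply Finset.sum_subset
      · intro a ha; simp only [hΩ, Finset.mem_Icc] at ha ⊢; omega
      · intro a ha hna
        simp only [hΩ, Finset.mem_Icc] at ha hna
        rw [gg_zero_of_ge N hN (a + 2) (by omega)]
        simp
    have e3 : ∑ m ∈ W, (gg N (m + 2) : ℝ) * Real.sin ((m:ℝ) * x)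
        = ∑ m ∈ Ω, (gg N (m + 2) : ℝ) * Real.sin ((m:ℝ) * x) := by
      apply Finset.sum_subset
      · intro a ha; simp only [hW, hΩ, Finset.mem_Icc] at ha ⊢; omega
      · intro a ha hna
        simp only [hW, hΩ, Finset.mem_Icc] at ha hna
        rw [gg_zero_of_ge N hN (a + 2) (by omega)]
        simp
    rw [e1, e2, e3]
  have main : Real.sin x ^ 2 * ∑ k ∈ W, f k
      = (1/4) * ∑ m ∈ W, ((2 * gg N m - gg N (m - 2) - gg N (m + 2) : ℤ) : ℝ) * Real.sin ((m:ℝ) * x) := by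
    have l1 : Real.sin x ^ 2 * ∑ k ∈ W, f k
        = ∑ k ∈ W, (2 * f k - (gg N k : ℝ) * Real.sin (((k:ℝ) + 2) * x)
            - (gg N k : ℝ) * Real.sin (((k:ℝ) - 2) * x)) / 4 := by
      rw [Finset.mul_sum]
      apply Finset.sum_congr rfl
      intro k _
      have := sin_shift_combine (gg N k : ℝ) ((k:ℝ) * x) x
      simp only [hf]
      rw [this]
      ring_nf
    rw [l1]
    have l2 : ∑ k ∈ W, (2 * f k - (gg N k : ℝ) * Real.sin (((k:ℝ) + 2) * x)
            - (gg N k : ℝ) * Real.sin (((k:ℝ) - 2) * x)) / 4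
        = (2 * ∑ k ∈ W, f k - ∑ k ∈ W, (gg N k : ℝ) * Real.sin (((k:ℝ) + 2) * x)
            - ∑ k ∈ W, (gg N k : ℝ) * Real.sin (((k:ℝ) - 2) * x)) / 4 := by
      rw [← Finset.sum_div, Finset.sum_sub_distrib, Finset.sum_sub_distrib, ← Finset.mul_sum]
    rw [l2, shiftp, shiftm]
    have r : ∑ m ∈ W, ((2 * gg N m - gg N (m - 2) - gg N (m + 2) : ℤ) : ℝ) * Real.sin ((m:ℝ) * x)
        = 2 * ∑ k ∈ W, f k - ∑ m ∈ W, (gg N (m - 2) : ℝ) * Real.sin ((m:ℝ) * x)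
          - ∑ m ∈ W, (gg N (m + 2) : ℝ) * Real.sin ((m:ℝ) * x) := by
      rw [Finset.mul_sum, ← Finset.sum_sub_distrib, ← Finset.sum_sub_distrib]
      apply Finset.sum_congr rfl
      intro m _
      simp only [hf]
      push_cast
      ring
    rw [r]
    ring
  rw [show Real.sin x ^ 2 * ((1/4) * ∑ k ∈ W, f k)
      = (1/4) * (Real.sin x ^ 2 * ∑ k ∈ W, f k) by ring, main]
  have d : ∀ m ∈ W, ((2 * gg N m - gg N (m - 2) - gg N (m + 2) : ℤ) : ℝ) * Real.sin ((m:ℝ) * x)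
      = (if m = (N:ℤ) then (6:ℝ) * Real.sin ((m:ℝ) * x) else 0)
        + (if m = -(N:ℤ) then (-6:ℝ) * Real.sin ((m:ℝ) * x) else 0)
        + (if m = 3*(N:ℤ) then (-2:ℝ) * Real.sin ((m:ℝ) * x) else 0)
        + (if m = -(3*(N:ℤ)) then (2:ℝ) * Real.sin ((m:ℝ) * x) else 0) := by
    intro m _
    rw [gg_delta N hN m]
    split_ifs <;> push_cast <;> ring
  rw [Finset.sum_congr rfl d]
  rw [Finset.sum_add_distrib, Finset.sum_add_distrib, Finset.sum_add_distrib,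
    Finset.sum_ite_eq', Finset.sum_ite_eq', Finset.sum_ite_eq', Finset.sum_ite_eq']
  rw [if_pos (show ((N:ℤ)) ∈ W by simp only [hW, Finset.mem_Icc]; omega),
      if_pos (show (-(N:ℤ)) ∈ W by simp only [hW, Finset.mem_Icc]; omega),
      if_pos (show (3*(N:ℤ)) ∈ W by simp only [hW, Finset.mem_Icc]; omega),
      if_pos (show (-(3*(N:ℤ))) ∈ W by simp only [hW, Finset.mem_Icc]; omega)]
  push_cast
  have e5 : Real.sin ((-(N:ℝ)) * x) = -Real.sin ((N:ℝ) * x) := by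
    rw [show (-(N:ℝ)) * x = -((N:ℝ) * x) by ring, Real.sin_neg]
  have e6 : Real.sin ((-(3 * (N:ℝ))) * x) = -Real.sin ((3 * (N:ℝ)) * x) := by
    rw [show (-(3 * (N:ℝ))) * x = -((3 * (N:ℝ)) * x) by ring, Real.sin_neg]
  have e7 : Real.sin ((3 * (N:ℝ)) * x) = 3 * Real.sin ((N:ℝ) * x) - 4 * Real.sin ((N:ℝ) * x) ^ 3 := by
    rw [show (3 * (N:ℝ)) * x = 3 * ((N:ℝ) * x) by ring, Real.sin_three_mul]
  rw [e5, e6, e7]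
  ring

lemma hasDerivAt_sin_sum (s : Finset ℕ) (c : ℕ → ℝ) (x : ℝ) :
    HasDerivAt (fun y => ∑ k ∈ s, c k * Real.sin (k * y))
      (∑ k ∈ s, (c k * k) * Real.cos (k * x)) x := by
  apply HasDerivAt.fun_sum
  intro k _
  have h1 : HasDerivAt (fun y : ℝ => (k:ℝ) * y) (k:ℝ) x := by
    simpa using (hasDerivAt_id x).const_mul (k:ℝ)
  have h2 := (Real.hasDerivAt_sin ((k:ℝ) * x)).comp x h1
  have h3 := h2.const_mul (c k)
  exact h3.congr_deriv (by ring)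

lemma hasDerivAt_cos_sum (s : Finset ℕ) (c : ℕ → ℝ) (x : ℝ) :
    HasDerivAt (fun y => ∑ k ∈ s, c k * Real.cos (k * y))
      (∑ k ∈ s, (-(c k * k)) * Real.sin (k * x)) x := by
  apply HasDerivAt.fun_sum
  intro k _
  have h1 : HasDerivAt (fun y : ℝ => (k:ℝ) * y) (k:ℝ) x := by
    simpa using (hasDerivAt_id x).const_mul (k:ℝ)
  have h2 := (Real.hasDerivAt_cos ((k:ℝ) * x)).comp x h1
  have h3 := h2.const_mul (c k)
  exact h3.congr_deriv (by ring)

lemma deriv2_pair (s t : Finset ℕ) (c d : ℕ → ℝ) (x : ℝ) :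
    deriv (deriv (fun y => ∑ k ∈ s, c k * Real.sin (k * y) + ∑ k ∈ t, d k * Real.sin (k * y))) x
    = ∑ k ∈ s, (-(c k * ((k:ℝ) * k))) * Real.sin (k * x)
      + ∑ k ∈ t, (-(d k * ((k:ℝ) * k))) * Real.sin (k * x) := by
  have h1 : deriv (fun y => ∑ k ∈ s, c k * Real.sin (k * y) + ∑ k ∈ t, d k * Real.sin (k * y))
      = fun z => ∑ k ∈ s, (c k * k) * Real.cos (k * z) + ∑ k ∈ t, (d k * k) * Real.cos (k * z) := by
    funext z
    exact ((hasDerivAt_sin_sum s c z).add (hasDerivAt_sin_sum t d z)).deriv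
  rw [h1]
  rw [((hasDerivAt_cos_sum s (fun k => c k * k) x).fun_add (hasDerivAt_cos_sum t (fun k => d k * k) x)).deriv]
  congr 1 <;> exact Finset.sum_congr rfl (fun k _ => by ring)

lemma deriv2_tau (A B τ : ℝ) :
    deriv (deriv (fun t => A * Real.cos t + B * Real.cos (3 * t))) τ
    = -(A * Real.cos τ) - 9 * (B * Real.cos (3 * τ)) := by
  have h3 : ∀ t : ℝ, HasDerivAt (fun t : ℝ => (3:ℝ) * t) 3 t := fun t => by
    simpa using (hasDerivAt_id t).const_mul (3:ℝ)
  have h1 : deriv (fun t => A * Real.cos t + B * Real.cos (3 * t))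
      = fun t => (-A) * Real.sin t + (-(3*B)) * Real.sin (3 * t) := by
    funext t
    have hA := (Real.hasDerivAt_cos t).const_mul A
    have hB := ((Real.hasDerivAt_cos (3 * t)).comp t (h3 t)).const_mul B
    have h := hA.add hB
    have h' : HasDerivAt (fun t => A * Real.cos t + B * Real.cos (3 * t))
        ((-A) * Real.sin t + (-(3*B)) * Real.sin (3 * t)) t := by
      exact h.congr_deriv (by ring)
    exact h'.deriv
  rw [h1]
  have hA := (Real.hasDerivAt_sin τ).const_mul (-A)
  have hB := ((Real.hasDerivAt_sin (3 * τ)).comp τ (h3 τ)).const_mul (-(3*B))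
  have h := hA.add hB
  have h' : HasDerivAt (fun t => (-A) * Real.sin t + (-(3*B)) * Real.sin (3 * t))
      (-(A * Real.cos τ) - 9 * (B * Real.cos (3 * τ))) τ := by
    exact h.congr_deriv (by ring)
  exact h'.deriv

theorem first_order_solution (N : ℕ) (hN : 0 < N) (u1 : ℝ → ℝ → ℝ)
    (hu1 : ∀ τ x : ℝ, u1 τ x =
      (∑ k ∈ (Finset.Icc 1 (3 * N - 2)).erase N,
        (-3 * Scoef N N N k / (4 * ((k : ℝ) ^ 2 - (N : ℝ) ^ 2)))
          * Real.cos τ * Real.sin (k * x))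
      + ∑ k ∈ Finset.Icc 1 (3 * N - 2),
        (-(Scoef N N N k) / (4 * ((k : ℝ) ^ 2 - 9 * (N : ℝ) ^ 2)))
          * Real.cos (3 * τ) * Real.sin (k * x)) :
    ∀ τ x : ℝ, x ∈ Set.Ioo 0 π →
      (N : ℝ) ^ 2 * deriv (deriv (fun t => u1 t x)) τ
        - deriv (deriv (fun y => u1 τ y)) x
      = 3 * N / 4 * Real.cos τ * Real.sin (N * x)
          - (Real.cos τ) ^ 3 * (Real.sin (N * x)) ^ 3 / (Real.sin x) ^ 2 := by
  intro τ x hx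
  set s1 : Finset ℕ := (Finset.Icc 1 (3 * N - 2)).erase N with hs1
  set s2 : Finset ℕ := Finset.Icc 1 (3 * N - 2) with hs2
  set c1 : ℕ → ℝ := fun k => -3 * Scoef N N N k / (4 * ((k : ℝ) ^ 2 - (N : ℝ) ^ 2)) with hc1
  set c3 : ℕ → ℝ := fun k => -(Scoef N N N k) / (4 * ((k : ℝ) ^ 2 - 9 * (N : ℝ) ^ 2)) with hc3
  -- rewrite the two directional functions
  have ht : (fun t => u1 t x) = fun t =>
      (∑ k ∈ s1, c1 k * Real.sin (k * x)) * Real.cos t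
      + (∑ k ∈ s2, c3 k * Real.sin (k * x)) * Real.cos (3 * t) := by
    funext t
    rw [hu1 t x, Finset.sum_mul, Finset.sum_mul]
    congr 1 <;> exact Finset.sum_congr rfl (fun k _ => by ring)
  have hxf : (fun y => u1 τ y) = fun y =>
      ∑ k ∈ s1, (c1 k * Real.cos τ) * Real.sin (k * y)
      + ∑ k ∈ s2, (c3 k * Real.cos (3 * τ)) * Real.sin (k * y) := by
    funext y
    exact hu1 τ y
  rw [ht, hxf, deriv2_tau, deriv2_pair]
  set A : ℝ := ∑ k ∈ s1, c1 k * Real.sin (k * x) with hA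
  set B : ℝ := ∑ k ∈ s2, c3 k * Real.sin (k * x) with hB
  set Q : ℝ := ∑ k ∈ s1, Scoef N N N k * Real.sin (k * x) with hQ
  set P : ℝ := ∑ k ∈ s2, Scoef N N N k * Real.sin (k * x) with hP
  -- per-term coefficient identities
  have HQ : ∀ k ∈ s1, c1 k * ((k:ℝ)^2 - (N:ℝ)^2) = -3 * Scoef N N N k / 4 := by
    intro k hk
    have hkN : k ≠ N := Finset.ne_of_mem_erase hk
    have hne : (k:ℝ)^2 - (N:ℝ)^2 ≠ 0 := by
      intro h
      apply hkN
      have h1 : ((k:ℝ) - N) * ((k:ℝ) + N) = 0 := by linear_combination h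
      rcases mul_eq_zero.mp h1 with h2 | h2
      · have : (k:ℝ) = N := by linarith
        exact_mod_cast this
      · have hN1 : (1:ℝ) ≤ N := by exact_mod_cast hN
        have hk0 : (0:ℝ) ≤ k := Nat.cast_nonneg k
        linarith
    rw [hc1]
    field_simp
  have HP : ∀ k ∈ s2, c3 k * ((k:ℝ)^2 - 9 * (N:ℝ)^2) = -(Scoef N N N k) / 4 := by
    intro k hk
    rw [hs2, Finset.mem_Icc] at hk
    have hne : (k:ℝ)^2 - 9 * (N:ℝ)^2 ≠ 0 := by
      intro h
      have h1 : ((k:ℝ) - 3*N) * ((k:ℝ) + 3*N) = 0 := by linear_combination h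
      have hk3N : k < 3 * N := by omega
      rcases mul_eq_zero.mp h1 with h2 | h2
      · have : (k:ℝ) = 3 * N := by linarith
        have : k = 3 * N := by exact_mod_cast this
        omega
      · have hN1 : (1:ℝ) ≤ N := by exact_mod_cast hN
        have hk1 : (1:ℝ) ≤ k := by exact_mod_cast hk.1
        linarith
    rw [hc3]
    field_simp
  -- collapse the cos τ part
  have C1 : (N:ℝ)^2 * (-(A * Real.cos τ)) - ∑ k ∈ s1, (-((c1 k * Real.cos τ) * ((k:ℝ) * k))) * Real.sin (k * x)
      = Real.cos τ * (-3/4) * Q := by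
    rw [hA, hQ, show (N:ℝ)^2 * (-((∑ k ∈ s1, c1 k * Real.sin (k * x)) * Real.cos τ))
      = ∑ k ∈ s1, (-(N:ℝ)^2 * Real.cos τ) * (c1 k * Real.sin (k * x)) by
        rw [← Finset.mul_sum]; ring]
    rw [← Finset.sum_sub_distrib, Finset.mul_sum]
    apply Finset.sum_congr rfl
    intro k hk
    linear_combination Real.cos τ * Real.sin (k * x) * HQ k hk
  have C2 : (N:ℝ)^2 * (-(9 * (B * Real.cos (3 * τ)))) - ∑ k ∈ s2, (-((c3 k * Real.cos (3 * τ)) * ((k:ℝ) * k))) * Real.sin (k * x)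
      = Real.cos (3 * τ) * (-1/4) * P := by
    rw [hB, hP, show (N:ℝ)^2 * (-(9 * ((∑ k ∈ s2, c3 k * Real.sin (k * x)) * Real.cos (3 * τ))))
      = ∑ k ∈ s2, (-(9:ℝ) * (N:ℝ)^2 * Real.cos (3 * τ)) * (c3 k * Real.sin (k * x)) by
        rw [← Finset.mul_sum]; ring]
    rw [← Finset.sum_sub_distrib, Finset.mul_sum]
    apply Finset.sum_congr rfl
    intro k hk
    linear_combination Real.cos (3 * τ) * Real.sin (k * x) * HP k hk
  -- relation between P and Q
  have hNmem : N ∈ s2 := by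
    rw [hs2, Finset.mem_Icc]
    omega
  have hPQ : P = (N:ℝ) * Real.sin ((N:ℝ) * x) + Q := by
    rw [hP, hQ, hs1, ← Finset.add_sum_erase _ _ hNmem, scoef_NN N hN]
  -- the key identity
  have hsin : Real.sin x ≠ 0 := ne_of_gt (Real.sin_pos_of_pos_of_lt_pi hx.1 hx.2)
  have hkey : (Real.sin ((N:ℝ) * x)) ^ 3 / (Real.sin x) ^ 2 = P := by
    rw [← key_identity N hN x, ← hs2, ← hP]
    rw [mul_div_cancel_left₀ _ (pow_ne_zero 2 hsin)]
  have hcos : (Real.cos τ) ^ 3 = (Real.cos (3 * τ) + 3 * Real.cos τ) / 4 := by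
    have := Real.cos_three_mul τ
    linarith
  calc (N : ℝ) ^ 2 * (-(A * Real.cos τ) - 9 * (B * Real.cos (3 * τ)))
        - (∑ k ∈ s1, (-((c1 k * Real.cos τ) * ((k:ℝ) * k))) * Real.sin (k * x)
          + ∑ k ∈ s2, (-((c3 k * Real.cos (3 * τ)) * ((k:ℝ) * k))) * Real.sin (k * x))
      = ((N:ℝ)^2 * (-(A * Real.cos τ)) - ∑ k ∈ s1, (-((c1 k * Real.cos τ) * ((k:ℝ) * k))) * Real.sin (k * x))
        + ((N:ℝ)^2 * (-(9 * (B * Real.cos (3 * τ)))) - ∑ k ∈ s2, (-((c3 k * Real.cos (3 * τ)) * ((k:ℝ) * k))) * Real.sin (k * x)) := by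
        ring
    _ = Real.cos τ * (-3/4) * Q + Real.cos (3 * τ) * (-1/4) * P := by rw [C1, C2]
    _ = 3 * N / 4 * Real.cos τ * Real.sin (N * x)
          - (Real.cos τ) ^ 3 * (Real.sin (N * x)) ^ 3 / (Real.sin x) ^ 2 := by
        rw [hcos, show (Real.cos (3*τ) + 3 * Real.cos τ) / 4 * (Real.sin ((N:ℝ) * x)) ^ 3 / (Real.sin x) ^ 2
          = (Real.cos (3*τ) + 3 * Real.cos τ) / 4 * ((Real.sin ((N:ℝ) * x)) ^ 3 / (Real.sin x) ^ 2) by ring,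
          hkey, hPQ]
        ring
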